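/- For A, B ∈ M₂(ℝ̄), A ≤_R B if and only if PC(A) ⊆ PC(B); moreover, PC(A) is a closed convex subset of ℝ̂ for every A, and every closed convex subset of ℝ̂ equals PC(A) for some A ∈ M₂(ℝ̄). Consequently, the map A ↦ PC(A) induces an order isomorphism from the poset of principal right ideals of M₂(ℝ̄) ordered by inclusion onto the poset of closed convex subsets of ℝ̂ ordered by inclusion. -/

import Mathlib

open scoped Classical ENNReal

/-- The tropical semiring `ℝ̄ = ℝ ∪ {-∞}`, carried by `WithBot ℝ`;
tropical addition is `max` and tropical multiplication is `+`. -/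
abbrev Rb : Type := WithBot ℝ

/-- Tropical matrix multiplication. -/
noncomputable def tMul {n : ℕ} (A B : Fin n → Fin n → Rb) : Fin n → Fin n → Rb :=
  fun i j => Finset.univ.sup fun k => A i k + B k j

/-- The column space of a matrix: all tropical linear combinations of its columns. -/
def ColSpace {n : ℕ} (A : Fin n → Fin n → Rb) : Set (Fin n → Rb) :=
  {v | ∃ c : Fin n → Rb, ∀ i, v i = Finset.univ.sup fun j => c j + A i j}

/-- The row space of a matrix: all tropical linear combinations of its rows. -/
def RowSpace {n : ℕ} (A : Fin n → Fin n → Rb) : Set (Fin n → Rb) :=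
  {v | ∃ c : Fin n → Rb, ∀ j, v j = Finset.univ.sup fun i => c i + A i j}

abbrev Mat2 : Type := Fin 2 → Fin 2 → Rb

/-- Inclusion of `ℝ̄` into the projective line `ℝ̂ = ℝ ∪ {-∞, +∞}` (modelled by `EReal`). -/
noncomputable def toE : Rb → EReal := WithBot.recBotCoe ⊥ (fun r : ℝ => (r : EReal))

/-- Projection of a vector `(a, b)` to `b - a ∈ ℝ̂`. -/
noncomputable def projPt (v : Fin 2 → Rb) : EReal := toE (v 1) - toE (v 0)

def zeroVec : Fin 2 → Rb := fun _ => ⊥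

/-- Projective column space. -/
noncomputable def PC (A : Mat2) : Set EReal :=
  {z | ∃ v ∈ ColSpace A, v ≠ zeroVec ∧ projPt v = z}

/-- Projective row space. -/
noncomputable def PR (A : Mat2) : Set EReal :=
  {z | ∃ v ∈ RowSpace A, v ≠ zeroVec ∧ projPt v = z}

/-- The metric `δ` on `ℝ̂`. -/
noncomputable def delta (x y : EReal) : ℝ≥0∞ :=
  if (∃ a : ℝ, x = (a : EReal)) ∧ (∃ b : ℝ, y = (b : EReal)) then
    ENNReal.ofReal |x.toReal - y.toReal|
  else if x = y then 0 else ⊤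

/-- `M` embeds isometrically into `N`. -/
def IsomEmbed (M N : Set EReal) : Prop :=
  ∃ f : EReal → EReal, Set.MapsTo f M N ∧ Set.InjOn f M ∧
    ∀ x ∈ M, ∀ y ∈ M, delta (f x) (f y) = delta x y

/-- `M` and `N` are isometric. -/
def Isom (M N : Set EReal) : Prop :=
  ∃ f : EReal → EReal, Set.BijOn f M N ∧
    ∀ x ∈ M, ∀ y ∈ M, delta (f x) (f y) = delta x y

/-- Closed convex subsets of `ℝ̂`: the empty set, singletons and closed intervals. -/
def IsClosedConvex (S : Set EReal) : Prop :=
  S = ∅ ∨ ∃ x y : EReal, x ≤ y ∧ S = Set.Icc x y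

/-- The principal right ideal generated by `A`. -/
noncomputable def rIdeal (A : Mat2) : Set Mat2 := {Z | ∃ X, Z = tMul A X}

/- ===================== auxiliary lemmas ===================== -/

lemma sup2 (f : Fin 2 → Rb) : Finset.univ.sup f = f 0 ⊔ f 1 := by
  rw [show (Finset.univ : Finset (Fin 2)) = {0, 1} by decide]
  simp [Finset.sup_insert]

lemma add_sup' (a b c : Rb) : a + (b ⊔ c) = (a + b) ⊔ (a + c) := by
  rcases le_total b c with h|h <;>
    simp [max_eq_right, max_eq_left, h, add_le_add_left, add_le_add_right]

lemma mem_colspace_iff (A : Mat2) (v : Fin 2 → Rb) :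
    v ∈ ColSpace A ↔ ∃ c : Fin 2 → Rb, ∀ i, v i = (c 0 + A i 0) ⊔ (c 1 + A i 1) := by
  unfold ColSpace; simp only [Set.mem_setOf_eq, sup2]

lemma tMul2 (A B : Mat2) (i j : Fin 2) :
    tMul A B i j = (A i 0 + B 0 j) ⊔ (A i 1 + B 1 j) := sup2 _

lemma rb_cases (x : Rb) : x = ⊥ ∨ ∃ r : ℝ, x = ↑r := by
  rcases x with _|r
  exacts [Or.inl rfl, Or.inr ⟨r, rfl⟩]

lemma fin2cases {P : Fin 2 → Prop} (h0 : P 0) (h1 : P 1) : ∀ i, P i := by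
  intro i; fin_cases i; exacts [h0, h1]

lemma vec_cases (v : Fin 2 → Rb) (hv : v ≠ zeroVec) :
    (∃ a : ℝ, v 0 = ↑a ∧ v 1 = ⊥) ∨ (∃ b : ℝ, v 0 = ⊥ ∧ v 1 = ↑b) ∨
      (∃ a b : ℝ, v 0 = ↑a ∧ v 1 = ↑b) := by
  rcases rb_cases (v 0) with h0 | ⟨a, h0⟩ <;> rcases rb_cases (v 1) with h1 | ⟨b, h1⟩
  · exact absurd (funext fun i => by fin_cases i <;> simp [zeroVec, h0, h1]) hv
  · exact Or.inr (Or.inl ⟨b, h0, h1⟩)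
  · exact Or.inl ⟨a, h0, h1⟩
  · exact Or.inr (Or.inr ⟨a, b, h0, h1⟩)

lemma ne_zero_of_coord {v : Fin 2 → Rb} {i : Fin 2} {r : ℝ} (h : v i = ↑r) :
    v ≠ zeroVec := by
  intro hz; rw [hz] at h; exact WithBot.coe_ne_bot h.symm

lemma projPt_eq_bot {v : Fin 2 → Rb} {a : ℝ} (h0 : v 0 = ↑a) (h1 : v 1 = ⊥) :
    projPt v = ⊥ := by
  simp [projPt, h0, h1, toE, EReal.bot_sub]

lemma projPt_eq_top {v : Fin 2 → Rb} {b : ℝ} (h0 : v 0 = ⊥) (h1 : v 1 = ↑b) :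
    projPt v = ⊤ := by
  simp [projPt, h0, h1, toE, EReal.sub_bot]

lemma projPt_eq_coe {v : Fin 2 → Rb} {a b : ℝ} (h0 : v 0 = ↑a) (h1 : v 1 = ↑b) :
    projPt v = ↑(b - a) := by
  simp [projPt, h0, h1, toE, EReal.coe_sub]

lemma rbAdd (l a : ℝ) : ((l : Rb) + (a : Rb)) = ((l + a : ℝ) : Rb) := by
  push_cast; ring_nf

lemma projPt_smul (v : Fin 2 → Rb) (l : ℝ) : projPt (fun i => ↑l + v i) = projPt v := by
  rcases rb_cases (v 0) with h0 | ⟨a, h0⟩ <;> rcases rb_cases (v 1) with h1 | ⟨b, h1⟩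
  · simp only [projPt, h0, h1, WithBot.add_bot]
  · rw [projPt_eq_top (v := fun i => (l:Rb) + v i) (b := l + b)
      (by show (↑l + v 0 : Rb) = _; rw [h0, WithBot.add_bot])
      (by show (↑l + v 1 : Rb) = _; rw [h1, rbAdd]), projPt_eq_top h0 h1]
  · rw [projPt_eq_bot (v := fun i => (l:Rb) + v i) (a := l + a)
      (by show (↑l + v 0 : Rb) = _; rw [h0, rbAdd])
      (by show (↑l + v 1 : Rb) = _; rw [h1, WithBot.add_bot]), projPt_eq_bot h0 h1]
  · rw [projPt_eq_coe (v := fun i => (l:Rb) + v i) (a := l + a) (b := l + b)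
      (by show (↑l + v 0 : Rb) = _; rw [h0, rbAdd])
      (by show (↑l + v 1 : Rb) = _; rw [h1, rbAdd]), projPt_eq_coe h0 h1]
    ring_nf

lemma smul_ne_zero' {v : Fin 2 → Rb} (l : ℝ) (hv : v ≠ zeroVec) :
    (fun i => ↑l + v i) ≠ zeroVec := by
  intro h; apply hv; funext i
  have h2 := congrFun h i
  simp only [zeroVec] at h2 ⊢
  rcases WithBot.add_eq_bot.1 h2 with h3 | h3
  · exact absurd h3 WithBot.coe_ne_bot
  · exact h3

lemma proj_eq_scalar {v w : Fin 2 → Rb} (hv : v ≠ zeroVec) (hw : w ≠ zeroVec)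
    (h : projPt v = projPt w) : ∃ l : ℝ, ∀ i, v i = ↑l + w i := by
  rcases vec_cases v hv with ⟨a,h0,h1⟩|⟨b,h0,h1⟩|⟨a,b,h0,h1⟩ <;>
    rcases vec_cases w hw with ⟨a',g0,g1⟩|⟨b',g0,g1⟩|⟨a',b',g0,g1⟩
  · refine ⟨a - a', fin2cases ?_ ?_⟩
    · rw [h0, g0, rbAdd]; exact WithBot.coe_inj.2 (by ring)
    · rw [h1, g1, WithBot.add_bot]
  · rw [projPt_eq_bot h0 h1, projPt_eq_top g0 g1] at h; simp at h
  · rw [projPt_eq_bot h0 h1, projPt_eq_coe g0 g1] at h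
    exact absurd h.symm (EReal.coe_ne_bot _)
  · rw [projPt_eq_top h0 h1, projPt_eq_bot g0 g1] at h; simp at h
  · refine ⟨b - b', fin2cases ?_ ?_⟩
    · rw [h0, g0, WithBot.add_bot]
    · rw [h1, g1, rbAdd]; exact WithBot.coe_inj.2 (by ring)
  · rw [projPt_eq_top h0 h1, projPt_eq_coe g0 g1] at h
    exact absurd h.symm (EReal.coe_ne_top _)
  · rw [projPt_eq_coe h0 h1, projPt_eq_bot g0 g1] at h
    exact absurd h (EReal.coe_ne_bot _)
  · rw [projPt_eq_coe h0 h1, projPt_eq_top g0 g1] at h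
    exact absurd h (EReal.coe_ne_top _)
  · rw [projPt_eq_coe h0 h1, projPt_eq_coe g0 g1] at h
    have hh : b - a = b' - a' := by exact_mod_cast h
    refine ⟨a - a', fin2cases ?_ ?_⟩
    · rw [h0, g0, rbAdd]; exact WithBot.coe_inj.2 (by ring)
    · rw [h1, g1, rbAdd]; exact WithBot.coe_inj.2 (by linarith)

lemma zero_mem_colspace (A : Mat2) : zeroVec ∈ ColSpace A := by
  refine ⟨fun _ => ⊥, fun i => ?_⟩
  simp [sup2, zeroVec]

lemma col_mem_colspace (A : Mat2) (j : Fin 2) : (fun i => A i j) ∈ ColSpace A := by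
  refine (mem_colspace_iff A _).2 ⟨fun m => if m = j then 0 else ⊥, fun i => ?_⟩
  fin_cases j <;> simp

lemma smul_mem_colspace {A : Mat2} {v : Fin 2 → Rb} (l : ℝ) (hv : v ∈ ColSpace A) :
    (fun i => ↑l + v i) ∈ ColSpace A := by
  rw [mem_colspace_iff] at hv ⊢
  obtain ⟨c, hc⟩ := hv
  refine ⟨fun j => ↑l + c j, fun i => ?_⟩
  rw [hc i, add_sup', add_assoc, add_assoc]

lemma exists_to_colspace {A B : Mat2} (h : ∃ X, A = tMul B X) :
    ColSpace A ⊆ ColSpace B := by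
  obtain ⟨X, rfl⟩ := h
  intro v hv
  rw [mem_colspace_iff] at hv ⊢
  obtain ⟨c, hc⟩ := hv
  refine ⟨fun k => (c 0 + X k 0) ⊔ (c 1 + X k 1), fun i => ?_⟩
  have sup_add' : ∀ x y z : Rb, (x ⊔ y) + z = (x + z) ⊔ (y + z) := by
    intro x y z; rw [add_comm, add_sup', add_comm z x, add_comm z y]
  show _ = ((c 0 + X 0 0) ⊔ (c 1 + X 0 1) + B i 0) ⊔ ((c 0 + X 1 0) ⊔ (c 1 + X 1 1) + B i 1)
  rw [hc i, tMul2, tMul2, add_sup', add_sup', sup_add', sup_add', sup_sup_sup_comm]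
  ac_rfl

lemma cols_to_exists {A B : Mat2} (h : ∀ j, (fun i => A i j) ∈ ColSpace B) :
    ∃ X, A = tMul B X := by
  choose c hc using fun j => (mem_colspace_iff B _).1 (h j)
  refine ⟨fun k j => c j k, ?_⟩
  funext i j
  have := hc j i
  rw [tMul2, this, add_comm (c j 0) (B i 0), add_comm (c j 1) (B i 1)]

lemma colspace_iff_pc (A B : Mat2) : ColSpace A ⊆ ColSpace B ↔ PC A ⊆ PC B := by
  constructor
  · rintro h z ⟨v, hvC, hvne, rfl⟩; exact ⟨v, h hvC, hvne, rfl⟩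
  · intro h v hv
    by_cases hz : v = zeroVec
    · rw [hz]; exact zero_mem_colspace B
    · obtain ⟨w, hwC, hwne, hproj⟩ := h ⟨v, hv, hz, rfl⟩
      obtain ⟨l, hl⟩ := proj_eq_scalar hz hwne hproj.symm
      rw [funext hl]
      exact smul_mem_colspace l hwC

lemma main1 (A B : Mat2) : (∃ X, A = tMul B X) ↔ PC A ⊆ PC B := by
  rw [← colspace_iff_pc]
  exact ⟨exists_to_colspace, fun h => cols_to_exists fun j => h (col_mem_colspace A j)⟩

lemma rbSup (a a' : ℝ) : ((a : Rb) ⊔ ↑a') = ↑(max a a') := by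
  rcases le_total a a' with h|h <;>
    simp [max_eq_right, max_eq_left, h, WithBot.coe_le_coe]

lemma real9 (a b a' b' : ℝ) :
    min (b - a) (b' - a') ≤ max b b' - max a a' ∧
      max b b' - max a a' ≤ max (b - a) (b' - a') := by
  constructor <;> (simp only [max_def, min_def]; split_ifs <;> linarith)

lemma eMin (x y : ℝ) : ((min x y : ℝ) : EReal) = min ↑x ↑y := by
  rcases le_total x y with h|h <;>
    simp [min_eq_left, min_eq_right, h, EReal.coe_le_coe_iff]

lemma eMax (x y : ℝ) : ((max x y : ℝ) : EReal) = max ↑x ↑y := by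
  rcases le_total x y with h|h <;>
    simp [max_eq_left, max_eq_right, h, EReal.coe_le_coe_iff]

lemma sup_bound {v w : Fin 2 → Rb} (hv : v ≠ zeroVec) (hw : w ≠ zeroVec) :
    projPt (fun i => v i ⊔ w i) ∈
      Set.Icc (min (projPt v) (projPt w)) (max (projPt v) (projPt w)) := by
  have e0 : (fun i => v i ⊔ w i) 0 = v 0 ⊔ w 0 := rfl
  have e1 : (fun i => v i ⊔ w i) 1 = v 1 ⊔ w 1 := rfl
  rcases vec_cases v hv with ⟨a,h0,h1⟩|⟨b,h0,h1⟩|⟨a,b,h0,h1⟩ <;>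
    rcases vec_cases w hw with ⟨a',g0,g1⟩|⟨b',g0,g1⟩|⟨a',b',g0,g1⟩
  · rw [projPt_eq_bot (v := fun i => v i ⊔ w i) (a := max a a')
        (by rw [h0, g0, rbSup]) (by rw [h1, g1, sup_idem]),
      projPt_eq_bot h0 h1, projPt_eq_bot g0 g1]
    simp
  · rw [projPt_eq_coe (v := fun i => v i ⊔ w i) (a := a) (b := b')
        (by rw [h0, g0, sup_bot_eq]) (by rw [h1, g1, bot_sup_eq]),
      projPt_eq_bot h0 h1, projPt_eq_top g0 g1]
    exact ⟨le_trans (min_le_left _ _) bot_le, le_trans le_top (le_max_right _ _)⟩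
  · rw [projPt_eq_coe (v := fun i => v i ⊔ w i) (a := max a a') (b := b')
        (by rw [h0, g0, rbSup]) (by rw [h1, g1, bot_sup_eq]),
      projPt_eq_bot h0 h1, projPt_eq_coe g0 g1]
    refine ⟨le_trans (min_le_left _ _) bot_le, le_max_iff.2 (Or.inr ?_)⟩
    exact EReal.coe_le_coe_iff.2 (by nlinarith [le_max_right a a', le_max_left a a'])
  · rw [projPt_eq_coe (v := fun i => v i ⊔ w i) (a := a') (b := b)
        (by rw [h0, g0, bot_sup_eq]) (by rw [h1, g1, sup_bot_eq]),
      projPt_eq_top h0 h1, projPt_eq_bot g0 g1]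
    exact ⟨le_trans (min_le_right _ _) bot_le, le_trans le_top (le_max_left _ _)⟩
  · rw [projPt_eq_top (v := fun i => v i ⊔ w i) (b := max b b')
        (by rw [h0, g0, sup_idem]) (by rw [h1, g1, rbSup]),
      projPt_eq_top h0 h1, projPt_eq_top g0 g1]
    simp
  · rw [projPt_eq_coe (v := fun i => v i ⊔ w i) (a := a') (b := max b b')
        (by rw [h0, g0, bot_sup_eq]) (by rw [h1, g1, rbSup]),
      projPt_eq_top h0 h1, projPt_eq_coe g0 g1]
    refine ⟨min_le_iff.2 (Or.inr ?_), le_max_iff.2 (Or.inl le_top)⟩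
    exact EReal.coe_le_coe_iff.2 (by nlinarith [le_max_right b b'])
  · rw [projPt_eq_coe (v := fun i => v i ⊔ w i) (a := max a a') (b := b)
        (by rw [h0, g0, rbSup]) (by rw [h1, g1, sup_bot_eq]),
      projPt_eq_coe h0 h1, projPt_eq_bot g0 g1]
    refine ⟨le_trans (min_le_right _ _) bot_le, le_max_iff.2 (Or.inl ?_)⟩
    exact EReal.coe_le_coe_iff.2 (by nlinarith [le_max_left a a'])
  · rw [projPt_eq_coe (v := fun i => v i ⊔ w i) (a := a) (b := max b b')
        (by rw [h0, g0, sup_bot_eq]) (by rw [h1, g1, rbSup]),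
      projPt_eq_coe h0 h1, projPt_eq_top g0 g1]
    refine ⟨min_le_iff.2 (Or.inl ?_), le_max_iff.2 (Or.inr le_top)⟩
    exact EReal.coe_le_coe_iff.2 (by nlinarith [le_max_left b b'])
  · rw [projPt_eq_coe (v := fun i => v i ⊔ w i) (a := max a a') (b := max b b')
        (by rw [h0, g0, rbSup]) (by rw [h1, g1, rbSup]),
      projPt_eq_coe h0 h1, projPt_eq_coe g0 g1]
    obtain ⟨hl, hr⟩ := real9 a b a' b'
    constructor
    · rw [← eMin]; exact EReal.coe_le_coe_iff.2 hl
    · rw [← eMax]; exact EReal.coe_le_coe_iff.2 hr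

lemma pc_bound {A : Mat2} (h0 : (fun i => A i 0) ≠ zeroVec)
    (h1 : (fun i => A i 1) ≠ zeroVec) :
    PC A ⊆ Set.Icc (min (projPt fun i => A i 0) (projPt fun i => A i 1))
      (max (projPt fun i => A i 0) (projPt fun i => A i 1)) := by
  rintro z ⟨v, hvC, hvne, rfl⟩
  obtain ⟨c, hc⟩ := (mem_colspace_iff A v).1 hvC
  rcases rb_cases (c 0) with hc0 | ⟨l0, hc0⟩ <;> rcases rb_cases (c 1) with hc1 | ⟨l1, hc1⟩
  · refine absurd (funext fun i => ?_) hvne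
    show v i = ⊥
    rw [hc i, hc0, hc1, WithBot.bot_add, WithBot.bot_add, sup_idem]
  · have hv : v = fun i => ↑l1 + A i 1 :=
      funext fun i => by rw [hc i, hc0, hc1, WithBot.bot_add, bot_sup_eq]
    rw [hv, projPt_smul (fun i => A i 1) l1]
    exact ⟨min_le_right _ _, le_max_right _ _⟩
  · have hv : v = fun i => ↑l0 + A i 0 :=
      funext fun i => by rw [hc i, hc0, hc1, WithBot.bot_add, sup_bot_eq]
    rw [hv, projPt_smul (fun i => A i 0) l0]
    exact ⟨min_le_left _ _, le_max_left _ _⟩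
  · have hv : v = fun i => (↑l0 + A i 0) ⊔ (↑l1 + A i 1) :=
      funext fun i => by rw [hc i, hc0, hc1]
    have hb := sup_bound (smul_ne_zero' l0 h0) (smul_ne_zero' l1 h1)
    rw [projPt_smul (fun i => A i 0) l0, projPt_smul (fun i => A i 1) l1] at hb
    rw [hv]
    exact hb

lemma endpoint_mem {A : Mat2} (j : Fin 2) (h : (fun i => A i j) ≠ zeroVec) :
    projPt (fun i => A i j) ∈ PC A :=
  ⟨fun i => A i j, col_mem_colspace A j, h, rfl⟩

lemma achieve {A : Mat2} {j k : Fin 2} (hjk : j ≠ k)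
    (hj : (fun i => A i j) ≠ zeroVec) (hk : (fun i => A i k) ≠ zeroVec)
    {z : EReal} (hz : z ∈ Set.Icc (projPt fun i => A i j) (projPt fun i => A i k)) :
    z ∈ PC A := by
  obtain ⟨hz1, hz2⟩ := hz
  by_cases hzj : z = projPt (fun i => A i j)
  · rw [hzj]; exact endpoint_mem j hj
  by_cases hzk : z = projPt (fun i => A i k)
  · rw [hzk]; exact endpoint_mem k hk
  have hlt1 : projPt (fun i => A i j) < z := hz1.lt_of_ne (Ne.symm hzj)
  have hlt2 : z < projPt (fun i => A i k) := hz2.lt_of_ne hzk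
  have hzbot : z ≠ ⊥ := fun h => by rw [h] at hlt1; exact not_lt_bot hlt1
  have hztop : z ≠ ⊤ := fun h => by rw [h] at hlt2; exact not_top_lt hlt2
  lift z to ℝ using ⟨hztop, hzbot⟩ with r
  obtain ⟨a0, hj0⟩ : ∃ a0 : ℝ, A 0 j = ↑a0 := by
    rcases vec_cases _ hj with ⟨a,h0,h1⟩|⟨b,h0,h1⟩|⟨a,b,h0,h1⟩
    · exact ⟨a, h0⟩
    · rw [projPt_eq_top h0 h1] at hlt1; exact absurd hlt1 not_top_lt
    · exact ⟨a, h0⟩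
  obtain ⟨b1, hk1⟩ : ∃ b1 : ℝ, A 1 k = ↑b1 := by
    rcases vec_cases _ hk with ⟨a,h0,h1⟩|⟨b,h0,h1⟩|⟨a,b,h0,h1⟩
    · rw [projPt_eq_bot h0 h1] at hlt2; exact absurd hlt2 not_lt_bot
    · exact ⟨b, h1⟩
    · exact ⟨b, h1⟩
  classical
  set c : Fin 2 → Rb := fun m => if m = j then ↑(-a0) else ↑(r - b1) with hcdef
  have hcj : c j = ↑(-a0) := by simp [hcdef]
  have hck : c k = ↑(r - b1) := by simp [hcdef, Ne.symm hjk, hjk]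
  set v : Fin 2 → Rb := fun i => (c j + A i j) ⊔ (c k + A i k) with hvdef
  have hv0 : v 0 = ↑(0:ℝ) := by
    show (c j + A 0 j) ⊔ (c k + A 0 k) = _
    rcases rb_cases (A 0 k) with h | ⟨a1, h⟩
    · rw [hcj, hck, hj0, h, WithBot.add_bot, rbAdd, sup_bot_eq]; norm_num
    · have hr : (r : EReal) < ↑(b1 - a1) := by
        rw [projPt_eq_coe h hk1] at hlt2; exact hlt2
      have : r < b1 - a1 := EReal.coe_lt_coe_iff.1 hr
      rw [hcj, hck, hj0, h, rbAdd, rbAdd,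
        sup_eq_left.2 (WithBot.coe_le_coe.2 (by linarith))]
      norm_num
  have hv1 : v 1 = ↑r := by
    show (c j + A 1 j) ⊔ (c k + A 1 k) = _
    rcases rb_cases (A 1 j) with h | ⟨b0, h⟩
    · rw [hcj, hck, h, hk1, WithBot.add_bot, rbAdd, bot_sup_eq]; norm_num
    · have hr : (↑(b0 - a0) : EReal) < ↑r := by
        rw [projPt_eq_coe hj0 h] at hlt1; exact hlt1
      have : b0 - a0 < r := EReal.coe_lt_coe_iff.1 hr
      rw [hcj, hck, h, hk1, rbAdd, rbAdd,
        sup_eq_right.2 (WithBot.coe_le_coe.2 (by linarith))]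
      norm_num
  refine ⟨v, ?_, ne_zero_of_coord hv0, by rw [projPt_eq_coe hv0 hv1]; norm_num⟩
  refine (mem_colspace_iff A v).2 ⟨c, fun i => ?_⟩
  rw [hvdef]
  show (c j + A i j) ⊔ (c k + A i k) = _
  fin_cases j <;> fin_cases k
  · exact absurd rfl hjk
  · rfl
  · exact sup_comm _ _
  · exact absurd rfl hjk

lemma main2 (A : Mat2) : IsClosedConvex (PC A) := by
  by_cases h0 : (fun i => A i 0) = zeroVec <;> by_cases h1 : (fun i => A i 1) = zeroVec
  · left
    ext z
    simp only [Set.mem_empty_iff_false, iff_false]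
    rintro ⟨v, hvC, hvne, rfl⟩
    obtain ⟨c, hc⟩ := (mem_colspace_iff A v).1 hvC
    refine hvne (funext fun i => ?_)
    show v i = ⊥
    rw [hc i, show A i 0 = ⊥ from congrFun h0 i, show A i 1 = ⊥ from congrFun h1 i,
      WithBot.add_bot, WithBot.add_bot, sup_idem]
  · right
    refine ⟨projPt (fun i => A i 1), projPt (fun i => A i 1), le_rfl, ?_⟩
    rw [Set.Icc_self]
    ext z
    constructor
    · rintro ⟨v, hvC, hvne, rfl⟩
      obtain ⟨c, hc⟩ := (mem_colspace_iff A v).1 hvC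
      rcases rb_cases (c 1) with hb | ⟨l, hb⟩
      · refine absurd (funext fun i => ?_) hvne
        show v i = ⊥
        rw [hc i, show A i 0 = ⊥ from congrFun h0 i, hb,
          WithBot.add_bot, WithBot.bot_add, sup_idem]
      · have hv : v = fun i => ↑l + A i 1 := funext fun i => by
          rw [hc i, show A i 0 = ⊥ from congrFun h0 i, hb, WithBot.add_bot, bot_sup_eq]
        rw [hv, projPt_smul (fun i => A i 1) l]
        exact rfl
    · rintro rfl
      exact endpoint_mem 1 h1
  · right
    refine ⟨projPt (fun i => A i 0), projPt (fun i => A i 0), le_rfl, ?_⟩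
    rw [Set.Icc_self]
    ext z
    constructor
    · rintro ⟨v, hvC, hvne, rfl⟩
      obtain ⟨c, hc⟩ := (mem_colspace_iff A v).1 hvC
      rcases rb_cases (c 0) with hb | ⟨l, hb⟩
      · refine absurd (funext fun i => ?_) hvne
        show v i = ⊥
        rw [hc i, show A i 1 = ⊥ from congrFun h1 i, hb,
          WithBot.add_bot, WithBot.bot_add, sup_idem]
      · have hv : v = fun i => ↑l + A i 0 := funext fun i => by
          rw [hc i, show A i 1 = ⊥ from congrFun h1 i, hb, WithBot.add_bot, sup_bot_eq]
        rw [hv, projPt_smul (fun i => A i 0) l]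
        exact rfl
    · rintro rfl
      exact endpoint_mem 0 h0
  · right
    refine ⟨min (projPt fun i => A i 0) (projPt fun i => A i 1),
      max (projPt fun i => A i 0) (projPt fun i => A i 1), min_le_max, ?_⟩
    refine Set.Subset.antisymm (pc_bound h0 h1) ?_
    intro z hz
    rcases le_total (projPt fun i => A i 0) (projPt fun i => A i 1) with h | h
    · rw [min_eq_left h, max_eq_right h] at hz
      exact achieve (show (0 : Fin 2) ≠ 1 by decide) h0 h1 hz
    · rw [min_eq_right h, max_eq_left h] at hz
      exact achieve (show (1 : Fin 2) ≠ 0 by decide) h1 h0 hz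

noncomputable def cFor (z : EReal) : Fin 2 → Rb :=
  if z = ⊥ then ![0, ⊥] else if z = ⊤ then ![⊥, 0] else ![0, ↑z.toReal]

lemma cFor_spec (z : EReal) : cFor z ≠ zeroVec ∧ projPt (cFor z) = z := by
  induction z using EReal.rec with
  | bot =>
    have h : cFor ⊥ = ![0, ⊥] := if_pos rfl
    have h0 : cFor ⊥ 0 = ((0:ℝ) : Rb) := by rw [h]; simp
    have h1 : cFor ⊥ 1 = ⊥ := by rw [h]; simp
    exact ⟨ne_zero_of_coord h0, projPt_eq_bot h0 h1⟩
  | coe r =>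
    have h : cFor ↑r = ![0, ↑r] := by
      rw [cFor, if_neg (EReal.coe_ne_bot r), if_neg (EReal.coe_ne_top r)]
      simp [EReal.toReal_coe]
    have h0 : cFor ↑r 0 = ((0:ℝ) : Rb) := by rw [h]; simp
    have h1 : cFor ↑r 1 = ((r:ℝ) : Rb) := by rw [h]; simp
    refine ⟨ne_zero_of_coord h0, ?_⟩
    rw [projPt_eq_coe h0 h1]; norm_num
  | top =>
    have h : cFor ⊤ = ![⊥, 0] := by
      rw [cFor, if_neg (by simp), if_pos rfl]
    have h0 : cFor ⊤ 0 = (⊥ : Rb) := by rw [h]; simp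
    have h1 : cFor ⊤ 1 = ((0:ℝ) : Rb) := by rw [h]; simp
    exact ⟨ne_zero_of_coord h1, projPt_eq_top h0 h1⟩

lemma main3 (S : Set EReal) (hS : IsClosedConvex S) : ∃ A : Mat2, PC A = S := by
  rcases hS with h | ⟨x, y, hxy, rfl⟩
  · refine ⟨fun _ _ => ⊥, ?_⟩
    rw [h]
    ext z
    simp only [Set.mem_empty_iff_false, iff_false]
    rintro ⟨v, hvC, hvne, rfl⟩
    obtain ⟨c, hc⟩ := (mem_colspace_iff _ v).1 hvC
    refine hvne (funext fun i => ?_)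
    show v i = ⊥
    rw [hc i, WithBot.add_bot, WithBot.add_bot, sup_idem]
  · refine ⟨fun i m => cFor (if m = 0 then x else y) i, ?_⟩
    set A : Mat2 := fun i m => cFor (if m = 0 then x else y) i with hA
    have hcol0 : (fun i => A i 0) = cFor x := funext fun i => by simp [hA]
    have hcol1 : (fun i => A i 1) = cFor y := funext fun i => by
      simp [hA, show (1 : Fin 2) ≠ 0 by decide]
    have hne0 : (fun i => A i 0) ≠ zeroVec := by rw [hcol0]; exact (cFor_spec x).1
    have hne1 : (fun i => A i 1) ≠ zeroVec := by rw [hcol1]; exact (cFor_spec y).1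
    have hp0 : projPt (fun i => A i 0) = x := by rw [hcol0]; exact (cFor_spec x).2
    have hp1 : projPt (fun i => A i 1) = y := by rw [hcol1]; exact (cFor_spec y).2
    refine Set.Subset.antisymm ?_ ?_
    · have hb := pc_bound hne0 hne1
      rw [hp0, hp1, min_eq_left hxy, max_eq_right hxy] at hb
      exact hb
    · intro z hz
      refine achieve (show (0 : Fin 2) ≠ 1 by decide) hne0 hne1 ?_
      rw [hp0, hp1]
      exact hz

noncomputable def idM : Mat2 := fun i j => if i = j then 0 else ⊥

lemma tMul_id (A : Mat2) : tMul A idM = A := by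
  funext i j; rw [tMul2]; fin_cases j <;> simp [idM]

lemma rIdeal_subset_iff (A B : Mat2) : rIdeal A ⊆ rIdeal B ↔ PC A ⊆ PC B := by
  rw [← main1]
  constructor
  · intro h
    exact h ⟨idM, (tMul_id A).symm⟩
  · rintro hX Z ⟨Y, rfl⟩
    refine cols_to_exists fun j => ?_
    refine exists_to_colspace hX ?_
    refine (mem_colspace_iff A _).2 ⟨fun m => Y m j, fun i => ?_⟩
    show tMul A Y i j = _
    rw [tMul2, add_comm (Y 0 j) (A i 0), add_comm (Y 1 j) (A i 1)]

/-- `A ≤_R B` iff `PC(A) ⊆ PC(B)`; `PC(A)` is always closed convex; every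
closed convex subset of `ℝ̂` arises as some `PC(A)`; and consequently `A ↦ PC(A)` induces
an order isomorphism from the poset of principal right ideals (under inclusion) onto the
poset of closed convex subsets of `ℝ̂` (under inclusion). -/
theorem right_ideals_order_iso_closed_convex :
    (∀ A B : Mat2, (∃ X, A = tMul B X) ↔ PC A ⊆ PC B) ∧
    (∀ A : Mat2, IsClosedConvex (PC A)) ∧
    (∀ S : Set EReal, IsClosedConvex S → ∃ A : Mat2, PC A = S) ∧
    ∃ φ : {I : Set Mat2 // ∃ A, I = rIdeal A} ≃o {S : Set EReal // IsClosedConvex S},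
      ∀ A : Mat2, (φ ⟨rIdeal A, ⟨A, rfl⟩⟩ : Set EReal) = PC A := by
  have hPCcong : ∀ A B : Mat2, rIdeal A = rIdeal B → PC A = PC B := fun A B h =>
    Set.Subset.antisymm ((rIdeal_subset_iff A B).1 h.le) ((rIdeal_subset_iff B A).1 h.ge)
  have hIcong : ∀ A B : Mat2, PC A = PC B → rIdeal A = rIdeal B := fun A B h =>
    Set.Subset.antisymm ((rIdeal_subset_iff A B).2 h.le) ((rIdeal_subset_iff B A).2 h.ge)
  refine ⟨main1, main2, main3, ?_⟩
  have pick_spec : ∀ I : {I : Set Mat2 // ∃ A, I = rIdeal A}, I.1 = rIdeal I.2.choose :=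
    fun I => I.2.choose_spec
  have pick2_spec : ∀ S : {S : Set EReal // IsClosedConvex S},
      PC (main3 S.1 S.2).choose = S.1 := fun S => (main3 S.1 S.2).choose_spec
  refine ⟨⟨⟨fun I => ⟨PC I.2.choose, main2 _⟩,
    fun S => ⟨rIdeal (main3 S.1 S.2).choose, (main3 S.1 S.2).choose, rfl⟩, ?_, ?_⟩, ?_⟩, ?_⟩
  · -- left inverse
    intro I
    apply Subtype.ext
    show rIdeal _ = I.1
    have h2 := pick2_spec ⟨PC I.2.choose, main2 _⟩
    rw [pick_spec I]
    exact hIcong _ _ h2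
  · -- right inverse
    intro S
    apply Subtype.ext
    show PC _ = S.1
    have h := pick_spec ⟨rIdeal (main3 S.1 S.2).choose, (main3 S.1 S.2).choose, rfl⟩
    calc PC _ = PC (main3 S.1 S.2).choose := hPCcong _ _ h.symm
      _ = S.1 := pick2_spec S
  · -- map_rel_iff
    intro a b
    simp only [Equiv.coe_fn_mk, Subtype.mk_le_mk, Set.le_eq_subset]
    rw [← rIdeal_subset_iff, ← pick_spec a, ← pick_spec b]
    exact Iff.rfl
  · -- the formula
    intro A
    have h := pick_spec ⟨rIdeal A, ⟨A, rfl⟩⟩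
    exact hPCcong _ _ h.symm
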